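/- A nonempty word w over an ordered alphabet A = {a_1 < … < a_k} is π-clustering for a permutation π of A if and only if the language L(w^ω) of all finite factors of the periodic infinite word w^ω is ordered alsinic with respect to the orders <_π (on left extensions) and <_A (on right extensions). -/

import Mathlib

/-- `wordPow u p` is the `p`-fold concatenation `u^p`. -/
def wordPow {A : Type*} (u : List A) : ℕ → List A
  | 0 => []
  | n + 1 => u ++ wordPow u n

/-- A word is primitive if it is not a proper integer power of another word. -/
def Primitive {A : Type*} (w : List A) : Prop :=
  ∀ (v : List A) (m : ℕ), w = wordPow v m → m = 1

/-- The Burrows–Wheeler transform of a word: the last letters of its cyclic rotations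
listed in non-decreasing lexicographic order. -/
def bwt {A : Type*} [LinearOrder A] (w : List A) : List A :=
  (Multiset.sort
    (((List.range w.length).map (fun i => w.rotate i) : List (List A)) : Multiset (List A)) (· ≤ ·)).filterMap
    List.getLast?

/-- `w` is `π`-clustering: its BWT is `π(a₁)^{k₁} ⋯ π(a_k)^{k_k}` where `a₁ < … < a_k`
enumerates the alphabet and `k_i` is the number of occurrences of `π(a_i)` in `w`. -/
def Clustering {A : Type*} [LinearOrder A] [Fintype A] (π : Equiv.Perm A) (w : List A) : Prop :=
  bwt w =
    ((Finset.univ.sort (· ≤ ·)).map (fun a => List.replicate (w.count (π a)) (π a))).flatten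

/-- The language of the periodic infinite word `w^ω`: all factors of powers of `w`. -/
def perLang {A : Type*} (w : List A) : Set (List A) :=
  { v | ∃ m : ℕ, v <:+: wordPow w m }

set_option linter.unusedSectionVars false
namespace BWTAux
variable {A : Type*}

variable {A : Type*}

theorem wordPow_length (u : List A) (m : ℕ) : (wordPow u m).length = m * u.length := by
  induction m with
  | zero => simp [wordPow]
  | succ k ih => simp [wordPow, ih, Nat.succ_mul, Nat.add_comm]

theorem wordPow_getElem (u : List A) (hu : u ≠ []) (m k : ℕ) (h : k < (wordPow u m).length) :
    (wordPow u m)[k] = u[k % u.length]'(Nat.mod_lt _ (List.length_pos_iff.mpr hu)) := by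
  induction m generalizing k with
  | zero => simp [wordPow] at h
  | succ p ih =>
    have hup : wordPow u (p+1) = u ++ wordPow u p := rfl
    rcases lt_or_ge k u.length with hk | hk
    · rw [List.getElem_of_eq hup, List.getElem_append_left hk]
      congr 1
      exact (Nat.mod_eq_of_lt hk).symm
    · have h' : k - u.length < (wordPow u p).length := by
        have := h; rw [hup, List.length_append] at this; omega
      rw [List.getElem_of_eq hup, List.getElem_append_right hk, ih _ h']
      congr 1
      exact (Nat.mod_eq_sub_mod hk).symm

theorem mem_perLang_iff (w : List A) (hw : w ≠ []) (v : List A) :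
    v ∈ perLang w ↔ ∃ p : ℕ, ∀ t (ht : t < v.length),
      v[t] = w[(p + t) % w.length]'(Nat.mod_lt _ (List.length_pos_iff.mpr hw)) := by
  have hn : 0 < w.length := List.length_pos_iff.mpr hw
  constructor
  · rintro ⟨m, s, t, hst⟩
    refine ⟨s.length, fun k hk => ?_⟩
    have hlen : s.length + k < (s ++ v ++ t).length := by
      simp only [List.length_append]; omega
    have h1 : (s ++ v ++ t)[s.length + k] = v[k] := by
      rw [List.getElem_append_left (by simp only [List.length_append]; omega),
        List.getElem_append_right (by omega)]
      congr 1
      omega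
    rw [← h1, List.getElem_of_eq hst, wordPow_getElem w hw]
  · rintro ⟨p, hp⟩
    refine ⟨p + v.length, ?_⟩
    set M := p + v.length with hM
    have hlen : p + v.length ≤ (wordPow w M).length := by
      rw [wordPow_length]
      calc p + v.length ≤ M * 1 := by omega
        _ ≤ M * w.length := Nat.mul_le_mul_left _ hn
    have hv : v = ((wordPow w M).drop p).take v.length := by
      apply List.ext_getElem
      · rw [List.length_take, List.length_drop]
        omega
      · intro k h1 h2
        rw [List.getElem_take, List.getElem_drop, wordPow_getElem w hw, hp k h1]
    rw [hv]
    exact (List.take_prefix _ _).isInfix.trans (List.drop_suffix _ _).isInfix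


/-- The periodic letter sequence of `w`. -/
def pw (w : List A) (hw : w ≠ []) (k : ℕ) : A :=
  w[k % w.length]'(Nat.mod_lt _ (List.length_pos_iff.mpr hw))

theorem pw_congr (w : List A) (hw : w ≠ []) {a b : ℕ} (h : a ≡ b [MOD w.length]) :
    pw w hw a = pw w hw b := by
  unfold pw
  congr 1

theorem pw_add_len (w : List A) (hw : w ≠ []) (a : ℕ) : pw w hw (a + w.length) = pw w hw a :=
  pw_congr w hw Nat.add_modEq_right

theorem mem_perLang_iff' (w : List A) (hw : w ≠ []) (v : List A) :
    v ∈ perLang w ↔ ∃ p : ℕ, ∀ t (ht : t < v.length), v[t] = pw w hw (p + t) :=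
  mem_perLang_iff w hw v

theorem rot_ne {w : List A} (hw : w ≠ []) (i : ℕ) : w.rotate i ≠ [] := by
  intro h
  apply hw
  simpa using congrArg List.length h

theorem rot_getElem (w : List A) (hw : w ≠ []) (i t : ℕ) (h : t < (w.rotate i).length) :
    (w.rotate i)[t] = pw w hw (t + i) := by
  rw [List.getElem_rotate]
  rfl

theorem lastRot (w : List A) (hw : w ≠ []) (i : ℕ) :
    (w.rotate i).getLast (rot_ne hw i) = pw w hw (w.length - 1 + i) := by
  rw [List.getLast_eq_getElem, rot_getElem w hw]
  congr 1
  rw [List.length_rotate]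

/-- key1: an occurrence `a·z` in `w^ω` with `|z| ≤ |w|` gives a rotation with prefix `z`
and last letter `a`. -/
theorem exists_rot {w : List A} (hw : w ≠ []) (a : A) (z : List A) (hz : z.length ≤ w.length)
    (h : (a :: z) ∈ perLang w) :
    ∃ i, i < w.length ∧ z <+: w.rotate i ∧ (w.rotate i).getLast (rot_ne hw i) = a := by
  have hn : 0 < w.length := List.length_pos_iff.mpr hw
  rw [mem_perLang_iff' w hw] at h
  obtain ⟨p, hp⟩ := h
  refine ⟨(p + 1) % w.length, Nat.mod_lt _ hn, ?_, ?_⟩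
  · rw [List.prefix_iff_eq_take]
    apply List.ext_getElem
    · rw [List.length_take, List.length_rotate]
      omega
    · intro t h1 h2
      rw [List.getElem_take, rot_getElem w hw]
      have h3 := hp (t + 1) (by simpa using Nat.succ_lt_succ h1)
      simp only [List.getElem_cons_succ] at h3
      rw [h3]
      apply pw_congr
      calc p + (t + 1) = t + (p + 1) := by omega
        _ ≡ t + (p + 1) % w.length [MOD w.length] :=
          Nat.ModEq.add_left t (Nat.mod_modEq _ _).symm
  · rw [lastRot w hw]
    have h0 := hp 0 (by simp)
    simp only [List.getElem_cons_zero] at h0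
    rw [h0]
    apply pw_congr
    calc w.length - 1 + (p + 1) % w.length
        ≡ w.length - 1 + (p + 1) [MOD w.length] :=
          Nat.ModEq.add_left _ (Nat.mod_modEq _ _)
      _ = p + 0 + w.length := by omega
      _ ≡ p + 0 [MOD w.length] := Nat.add_modEq_right

/-- key2: a prefix of a rotation, preceded by the rotation's last letter, is in the language. -/
theorem rot_mem {w : List A} (hw : w ≠ []) (i : ℕ) (z : List A) (hz : z <+: w.rotate i) :
    ((w.rotate i).getLast (rot_ne hw i) :: z) ∈ perLang w := by
  have hn : 0 < w.length := List.length_pos_iff.mpr hw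
  rw [mem_perLang_iff' w hw]
  refine ⟨w.length - 1 + i, fun t ht => ?_⟩
  match t with
  | 0 => simpa using lastRot w hw i
  | t + 1 =>
    simp only [List.getElem_cons_succ]
    have hlen : t < (w.rotate i).length := by
      rw [List.length_rotate]
      have := hz.length_le
      rw [List.length_rotate] at this
      simp at ht
      omega
    rw [hz.getElem (by simp at ht; omega), rot_getElem w hw i t hlen]
    apply pw_congr
    calc t + i ≡ t + i + w.length [MOD w.length] := Nat.add_modEq_right.symm
      _ = w.length - 1 + i + (t + 1) := by omega

/-- key3: if `v` is at least a full period long, the right extension is determined. -/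
theorem right_ext_determined {w : List A} (hw : w ≠ []) (a b : A) (v : List A)
    (hv : w.length ≤ v.length) (h : (a :: (v ++ [b])) ∈ perLang w) :
    b = v[v.length - w.length]'(by have := List.length_pos_iff.mpr hw; omega) := by
  have hn : 0 < w.length := List.length_pos_iff.mpr hw
  rw [mem_perLang_iff' w hw] at h
  obtain ⟨p, hp⟩ := h
  have hb := hp (v.length + 1) (by simp)
  have hv' := hp ((v.length - w.length) + 1) (by simp)
  have e1 : (a :: (v ++ [b]))[v.length + 1]'(by simp) = b := by
    simp only [List.getElem_cons_succ]
    rw [List.getElem_append_right (le_refl _)]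
    simp
  have e2 : (a :: (v ++ [b]))[(v.length - w.length) + 1]'(by simp)
      = v[v.length - w.length]'(by omega) := by
    simp only [List.getElem_cons_succ]
    rw [List.getElem_append_left (by omega)]
  rw [e1] at hb
  rw [e2] at hv'
  rw [hb, hv']
  apply pw_congr
  calc p + (v.length + 1) = p + ((v.length - w.length) + 1) + w.length := by omega
    _ ≡ p + ((v.length - w.length) + 1) [MOD w.length] := Nat.add_modEq_right

/-- perLang is closed under infix. -/
theorem perLang_infix {w : List A} {u v : List A} (h : u <:+: v) (hv : v ∈ perLang w) :
    u ∈ perLang w := by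
  obtain ⟨m, hm⟩ := hv
  exact ⟨m, h.trans hm⟩


section LexPart
variable [LinearOrder A]

theorem lt_of_prefix_lt {v r s : List A} {b d : A}
    (hb : v ++ [b] <+: r) (hd : v ++ [d] <+: s) (h : b < d) : r < s := by
  obtain ⟨t1, ht1⟩ := hb
  obtain ⟨t2, ht2⟩ := hd
  rw [← ht1, ← ht2]
  rw [List.append_assoc, List.append_assoc, List.singleton_append, List.singleton_append]
  show List.Lex (· < ·) _ _
  clear ht1 ht2
  induction v with
  | nil => exact List.Lex.rel h
  | cons x t ih => exact List.Lex.cons ih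

theorem exists_split {r s : List A} (hlen : r.length = s.length) (h : r < s) :
    ∃ v : List A, ∃ b d : A, v ++ [b] <+: r ∧ v ++ [d] <+: s ∧ b < d := by
  replace h : List.Lex (· < ·) r s := h
  induction h with
  | nil => simp at hlen
  | @rel a l₁ b l₂ hab =>
    exact ⟨[], a, b, ⟨l₁, rfl⟩, ⟨l₂, rfl⟩, hab⟩
  | @cons a l₁ l₂ hlex ih =>
    obtain ⟨v, b, d, h1, h2, h3⟩ := ih (by simpa using hlen)
    obtain ⟨u1, hu1⟩ := h1
    obtain ⟨u2, hu2⟩ := h2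
    exact ⟨a :: v, b, d, ⟨u1, by simp [← hu1]⟩, ⟨u2, by simp [← hu2]⟩, h3⟩

end LexPart

section BWTPart
variable [LinearOrder A]

def rotL (w : List A) : List (List A) := (List.range w.length).map (fun i => w.rotate i)

def sortedRot (w : List A) : List (List A) := Multiset.sort ↑(rotL w) (· ≤ ·)

theorem sortedRot_perm (w : List A) : (sortedRot w).Perm (rotL w) :=
  Multiset.coe_eq_coe.mp (Multiset.sort_eq _ _)

theorem sortedRot_sorted (w : List A) : (sortedRot w).Pairwise (· ≤ ·) :=
  Multiset.pairwise_sort _ _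

theorem mem_rotL {w : List A} {l : List A} : l ∈ rotL w ↔ ∃ i, i < w.length ∧ w.rotate i = l := by
  simp [rotL, List.mem_range]

def flast (w : List A) (hw : w ≠ []) : List A → A := fun l => l.getLastD (w.getLast hw)

theorem flast_eq {w : List A} (hw : w ≠ []) {l : List A} (hl : l ≠ []) :
    flast w hw l = l.getLast hl := by
  rw [flast, List.getLastD_eq_getLast?, List.getLast?_eq_getLast hl, Option.getD_some]

theorem filterMap_getLast? (c : A) (L : List (List A)) (h : ∀ l ∈ L, l ≠ []) :
    L.filterMap List.getLast? = L.map (fun l => l.getLastD c) := by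
  induction L with
  | nil => rfl
  | cons l t ih =>
    have hl : l ≠ [] := h l (by simp)
    rw [List.filterMap_cons, List.map_cons, List.getLast?_eq_getLast hl,
      ih (fun x hx => h x (by simp [hx]))]
    congr 1
    rw [List.getLastD_eq_getLast?, List.getLast?_eq_getLast hl, Option.getD_some]

theorem bwt_eq_map {w : List A} (hw : w ≠ []) : bwt w = (sortedRot w).map (flast w hw) := by
  have h : ∀ l ∈ sortedRot w, l ≠ [] := by
    intro l hl
    obtain ⟨i, _, hi⟩ := mem_rotL.mp ((sortedRot_perm w).mem_iff.mp hl)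
    rw [← hi]
    exact rot_ne hw i
  exact filterMap_getLast? (w.getLast hw) _ h

theorem map_flast_rotL {w : List A} (hw : w ≠ []) :
    (rotL w).map (flast w hw) = w.getLast hw :: w.dropLast := by
  have hn : 0 < w.length := List.length_pos_iff.mpr hw
  apply List.ext_getElem
  · simp [rotL]
    omega
  · intro k h1 h2
    have hk : k < w.length := by simpa [rotL] using h1
    have e1 : ((rotL w).map (flast w hw))[k] = flast w hw (w.rotate k) := by
      simp [rotL]
    rw [e1, flast_eq hw (rot_ne hw k), lastRot w hw k]
    match k with
    | 0 =>
      simp only [List.getElem_cons_zero, List.getLast_eq_getElem, pw]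
      congr 1
      simp only [Nat.add_zero]
      exact Nat.mod_eq_of_lt (by omega)
    | t + 1 =>
      simp only [List.getElem_cons_succ, List.getElem_dropLast, pw]
      congr 1
      have ht : t < w.length - 1 := by
        simp at h2
        omega
      calc (w.length - 1 + (t + 1)) % w.length = (t + w.length) % w.length := by
            congr 1
            omega
        _ = t % w.length := Nat.add_mod_right t _
        _ = t := Nat.mod_eq_of_lt (by omega)

theorem count_bwt {w : List A} (hw : w ≠ []) (x : A) : (bwt w).count x = w.count x := by
  rw [bwt_eq_map hw]
  rw [((sortedRot_perm w).map (flast w hw)).count_eq, map_flast_rotL hw]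
  calc (w.getLast hw :: w.dropLast).count x = (w.dropLast ++ [w.getLast hw]).count x :=
        ((List.perm_append_singleton _ _).symm).count_eq x
    _ = w.count x := by rw [List.dropLast_append_getLast hw]

theorem pairwise_bwt_iff {w : List A} (hw : w ≠ []) {R : A → A → Prop} (hrefl : ∀ a, R a a) :
    (bwt w).Pairwise R ↔ ∀ i j, i < w.length → j < w.length → w.rotate i ≤ w.rotate j →
      R ((w.rotate i).getLast (rot_ne hw i)) ((w.rotate j).getLast (rot_ne hw j)) := by
  rw [bwt_eq_map hw, List.pairwise_map]
  have hmem : ∀ i, i < w.length → w.rotate i ∈ sortedRot w := fun i hi =>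
    (sortedRot_perm w).mem_iff.mpr (mem_rotL.mpr ⟨i, hi, rfl⟩)
  have hS := sortedRot_sorted w
  constructor
  · intro hP i j hi hj hle
    rcases eq_or_lt_of_le hle with heq | hlt
    · have hg : (w.rotate i).getLast (rot_ne hw i) = (w.rotate j).getLast (rot_ne hw j) := by
        rw [← flast_eq hw (rot_ne hw i), ← flast_eq hw (rot_ne hw j), heq]
      rw [hg]
      exact hrefl _
    · obtain ⟨p, hp, hpe⟩ := List.mem_iff_getElem.mp (hmem i hi)
      obtain ⟨q, hq, hqe⟩ := List.mem_iff_getElem.mp (hmem j hj)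
      have hne : p ≠ q := by
        intro e
        subst e
        rw [← hpe, ← hqe] at hlt
        exact lt_irrefl _ hlt
      have hpq : p < q := by
        rcases lt_or_ge p q with h | h
        · exact h
        · have h' : q < p := lt_of_le_of_ne h fun e => hne e.symm
          exfalso
          have hle2 := List.pairwise_iff_getElem.mp hS q p hq hp h'
          rw [hpe, hqe] at hle2
          exact absurd hlt (not_lt.mpr hle2)
      have := List.pairwise_iff_getElem.mp hP p q hp hq hpq
      rw [hpe, hqe] at this
      rw [← flast_eq hw (rot_ne hw i), ← flast_eq hw (rot_ne hw j)]
      exact this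
  · intro h
    rw [List.pairwise_iff_getElem]
    intro p q hp hq hpq
    obtain ⟨i, hi, hie⟩ := mem_rotL.mp ((sortedRot_perm w).mem_iff.mp
      (List.getElem_mem hp))
    obtain ⟨j, hj, hje⟩ := mem_rotL.mp ((sortedRot_perm w).mem_iff.mp
      (List.getElem_mem hq))
    have hle : (sortedRot w)[p] ≤ (sortedRot w)[q] :=
      List.pairwise_iff_getElem.mp hS p q hp hq hpq
    rw [← hie, ← hje] at hle ⊢
    rw [flast_eq hw (rot_ne hw i), flast_eq hw (rot_ne hw j)]
    exact h i j hi hj hle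

end BWTPart

section MainPart
variable [LinearOrder A] [Fintype A]

theorem sum_sort_map (g : A → ℕ) :
    (((Finset.univ : Finset A).sort (· ≤ ·)).map g).sum = ∑ a : A, g a := by
  calc (((Finset.univ : Finset A).sort (· ≤ ·)).map g).sum
      = ((↑(((Finset.univ : Finset A).sort (· ≤ ·)).map g) : Multiset ℕ)).sum := by
        rw [Multiset.sum_coe]
    _ = ((Multiset.map g ↑((Finset.univ : Finset A).sort (· ≤ ·)))).sum := by
        rw [Multiset.map_coe]
    _ = ∑ a : A, g a := by rw [Finset.sort_eq]; rfl

theorem rhs_sorted (π : Equiv.Perm A) (w : List A) :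
    (((Finset.univ : Finset A).sort (· ≤ ·)).map
        (fun a => List.replicate (w.count (π a)) (π a))).flatten.Pairwise
      (fun x y => π.symm x ≤ π.symm y) := by
  rw [List.pairwise_flatten]
  constructor
  · intro l hl
    simp only [List.mem_map] at hl
    obtain ⟨a, _, rfl⟩ := hl
    rw [List.pairwise_iff_getElem]
    intro p q hp hq _
    rw [List.getElem_replicate, List.getElem_replicate]
  · rw [List.pairwise_map]
    apply List.Pairwise.imp ?_ (Finset.sortedLT_sort _).pairwise
    intro a b hab x hx y hy
    rw [List.eq_of_mem_replicate hx, List.eq_of_mem_replicate hy]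
    simp [hab.le]

theorem rhs_count (π : Equiv.Perm A) (w : List A) (x : A) :
    (((Finset.univ : Finset A).sort (· ≤ ·)).map
        (fun a => List.replicate (w.count (π a)) (π a))).flatten.count x = w.count x := by
  rw [List.count_flatten, List.map_map]
  have e : (List.count x ∘ fun a => List.replicate (w.count (π a)) (π a))
      = fun a => if π a = x then w.count (π a) else 0 := by
    funext a
    simp [List.count_replicate]
  rw [e, sum_sort_map]
  rw [Finset.sum_eq_single (π.symm x)]
  · simp
  · intro b _ hb
    rw [if_neg]
    intro hc
    exact hb (by rw [← hc]; simp)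
  · intro h
    exact absurd (Finset.mem_univ _) h

theorem clustering_iff_pairwise {w : List A} (hw : w ≠ []) (π : Equiv.Perm A) :
    Clustering π w ↔ (bwt w).Pairwise (fun x y => π.symm x ≤ π.symm y) := by
  constructor
  · intro h
    rw [Clustering] at h
    rw [h]
    exact rhs_sorted π w
  · intro h
    rw [Clustering]
    haveI : IsAntisymm A (fun x y => π.symm x ≤ π.symm y) :=
      ⟨fun a b h1 h2 => π.symm.injective (le_antisymm h1 h2)⟩
    refine List.Perm.eq_of_pairwise' h (rhs_sorted π w) ?_
    rw [List.perm_iff_count]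
    intro x
    rw [count_bwt hw, rhs_count]

theorem main_thm (w : List A) (hw : w ≠ []) (π : Equiv.Perm A) :
    Clustering π w ↔
      ∀ v ∈ perLang w, ∀ a b c d : A,
        (a :: (v ++ [b])) ∈ perLang w → (c :: (v ++ [d])) ∈ perLang w →
        π.symm a < π.symm c → b ≤ d := by
  have hn : 0 < w.length := List.length_pos_iff.mpr hw
  rw [clustering_iff_pairwise hw π, pairwise_bwt_iff hw (R := fun x y => π.symm x ≤ π.symm y) (fun a => le_refl _)]
  constructor
  · intro hmono v _ a b c d hab hcd hlt
    rcases le_or_gt (v.length + 1) w.length with hvlen | hvlen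
    · obtain ⟨i, hi, hpre_i, hlast_i⟩ := exists_rot hw a (v ++ [b]) (by simp; omega) hab
      obtain ⟨j, hj, hpre_j, hlast_j⟩ := exists_rot hw c (v ++ [d]) (by simp; omega) hcd
      by_contra hbd
      push_neg at hbd
      have hlt2 : w.rotate j < w.rotate i := lt_of_prefix_lt hpre_j hpre_i hbd
      have hmle := hmono j i hj hi hlt2.le
      rw [hlast_i, hlast_j] at hmle
      exact absurd hlt (not_lt.mpr hmle)
    · have hb := right_ext_determined hw a b v (by omega) hab
      have hd := right_ext_determined hw c d v (by omega) hcd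
      rw [hb, hd]
  · intro halsinic i j hi hj hle
    rcases eq_or_lt_of_le hle with heq | hlt
    · have hg : (w.rotate i).getLast (rot_ne hw i) = (w.rotate j).getLast (rot_ne hw j) := by
        rw [← flast_eq hw (rot_ne hw i), ← flast_eq hw (rot_ne hw j), heq]
      rw [hg]
    · have hlen : (w.rotate i).length = (w.rotate j).length := by
        simp [List.length_rotate]
      obtain ⟨v, b, d, hbpre, hdpre, hbd⟩ := exists_split hlen hlt
      have h1 : ((w.rotate i).getLast (rot_ne hw i) :: (v ++ [b])) ∈ perLang w :=
        rot_mem hw i _ hbpre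
      have h2 : ((w.rotate j).getLast (rot_ne hw j) :: (v ++ [d])) ∈ perLang w :=
        rot_mem hw j _ hdpre
      have hvmem : v ∈ perLang w :=
        perLang_infix ⟨[(w.rotate i).getLast (rot_ne hw i)], [b], rfl⟩ h1
      by_contra hR
      push_neg at hR
      have := halsinic v hvmem _ d _ b h2 h1 hR
      exact absurd this (not_le.mpr hbd)

end MainPart

end BWTAux

/-- A nonempty word `w` is `π`-clustering if and only if the language of `w^ω` is ordered
alsinic with respect to `<_π` (on left extensions, where `a <_π c ↔ π⁻¹(a) < π⁻¹(c)`) and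
`<_A` (on right extensions): for every factor `v` and edges `(a,b)`, `(c,d)` of its
extension graph, `a <_π c` implies `b ≤ d`. -/
theorem clustering_iff_ordered_alsinic {A : Type*} [LinearOrder A] [Fintype A]
    (w : List A) (hw : w ≠ []) (π : Equiv.Perm A) :
    Clustering π w ↔
      ∀ v ∈ perLang w, ∀ a b c d : A,
        (a :: (v ++ [b])) ∈ perLang w → (c :: (v ++ [d])) ∈ perLang w →
        π.symm a < π.symm c → b ≤ d := by
  exact BWTAux.main_thm w hw π
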